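/- For any doubly-0-astic n×n max-plus matrix W, the equivalence class C_W = {M doubly-0-astic : δ_M = δ_W on [a,b]^n} is closed under entrywise supremum and entrywise infimum; it is a complete lattice whose greatest element is W ∨ I_{a-b} and whose least element is the matrix W̲ with w̲_ij = w_ij if w_ij > a − b and w̲_ij = −∞ otherwise. -/

import Mathlib

/-- Max-plus product of a matrix with a real vector: `(W ⊗ x)_i = ⨆ j, w_ij + x_j`. -/
noncomputable def deltaE {n : ℕ} (W : Fin n → Fin n → EReal) (x : Fin n → ℝ) (i : Fin n) : EReal :=
  ⨆ j, W i j + (x j : EReal)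

/-- Min-plus adjoint candidate: `ε_W(y)_i = ⨅ j, y_j - w_ji`. -/
noncomputable def epsE {n : ℕ} (W : Fin n → Fin n → EReal) (y : Fin n → ℝ) (i : Fin n) : EReal :=
  ⨅ j, (y j : EReal) - W j i

/-- Row-0-astic: every row supremum equals 0. -/
def RowAstic {n : ℕ} (W : Fin n → Fin n → EReal) : Prop := ∀ i, (⨆ j, W i j) = 0

/-- Column-0-astic: every column supremum equals 0. -/
def ColAstic {n : ℕ} (W : Fin n → Fin n → EReal) : Prop := ∀ j, (⨆ i, W i j) = 0

/-- Doubly-0-astic. -/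
def DoublyAstic {n : ℕ} (W : Fin n → Fin n → EReal) : Prop := RowAstic W ∧ ColAstic W

/- ## Auxiliary lemmas -/

lemma myAux_sup_add_real (p q : EReal) (r : ℝ) : (p ⊔ q) + r = (p + r) ⊔ (q + r) := by
  rcases le_total p q with h | h
  · rw [sup_eq_right.2 h, sup_eq_right.2 (add_le_add_left h _)]
  · rw [sup_eq_left.2 h, sup_eq_left.2 (add_le_add_left h _)]

lemma myAux_entry_nonpos {n : ℕ} {M : Fin n → Fin n → EReal} (h : RowAstic M) (i j : Fin n) :
    M i j ≤ 0 :=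
  (le_iSup _ j).trans_eq (h i)

lemma myAux_row_exists {n : ℕ} [Nonempty (Fin n)] {M : Fin n → Fin n → EReal}
    (h : RowAstic M) (i : Fin n) : ∃ j, M i j = 0 := by
  obtain ⟨j, hj⟩ := exists_eq_ciSup_of_finite (f := fun j => M i j)
  exact ⟨j, hj.trans (h i)⟩

lemma myAux_col_exists {n : ℕ} [Nonempty (Fin n)] {M : Fin n → Fin n → EReal}
    (h : ColAstic M) (j : Fin n) : ∃ i, M i j = 0 := by
  obtain ⟨i, hi⟩ := exists_eq_ciSup_of_finite (f := fun i => M i j)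
  exact ⟨i, hi.trans (h j)⟩

lemma myAux_sup_c_eq {x w c : EReal} (hc : c < w) (h : x ⊔ c = w ⊔ c) : x = w := by
  rw [sup_eq_left.2 hc.le] at h
  rcases le_total x c with h' | h'
  · rw [sup_eq_right.2 h'] at h; exact absurd h hc.ne
  · rwa [sup_eq_left.2 h'] at h

lemma myAux_delta_ge {n : ℕ} [Nonempty (Fin n)] {a b : ℝ} {M : Fin n → Fin n → EReal}
    (hM : RowAstic M) {x : Fin n → ℝ} (hx : ∀ i, x i ∈ Set.Icc a b) (i : Fin n) :
    (a : EReal) ≤ deltaE M x i := by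
  obtain ⟨j, hj⟩ := myAux_row_exists hM i
  calc (a : EReal) ≤ (x j : EReal) := EReal.coe_le_coe_iff.2 (hx j).1
    _ = M i j + (x j : EReal) := by rw [hj, zero_add]
    _ ≤ deltaE M x i := by unfold deltaE; exact le_iSup (fun j => M i j + ((x j : ℝ) : EReal)) j

lemma myAux_delta_trunc {n : ℕ} [Nonempty (Fin n)] {a b : ℝ} {M : Fin n → Fin n → EReal}
    (hM : RowAstic M) {x : Fin n → ℝ} (hx : ∀ i, x i ∈ Set.Icc a b) (i : Fin n) :
    deltaE M x i = ⨆ j, ((M i j ⊔ ((a - b : ℝ) : EReal)) + (x j : EReal)) := by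
  have hlow := myAux_delta_ge (b := b) hM hx i
  unfold deltaE
  refine le_antisymm (iSup_mono fun j => add_le_add_left le_sup_left _) (iSup_le fun j => ?_)
  rw [myAux_sup_add_real]
  refine sup_le (le_iSup (fun j => M i j + ((x j : ℝ) : EReal)) j) ?_
  have h1 : ((a - b : ℝ) : EReal) + (x j : EReal) ≤ (a : EReal) := by
    rw [← EReal.coe_add]
    exact EReal.coe_le_coe_iff.2 (by linarith [(hx j).2])
  exact h1.trans hlow

lemma myAux_delta_test {n : ℕ} [Nonempty (Fin n)] {a b : ℝ} (hab : a ≤ b)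
    {M : Fin n → Fin n → EReal} (hM : RowAstic M) (i j : Fin n) :
    deltaE M (fun k => if k = j then b else a) i = (M i j + (b : EReal)) ⊔ (a : EReal) := by
  have hlow := myAux_delta_ge (a := a) (b := b) hM (x := fun k => if k = j then b else a)
    (fun k => by by_cases hk : k = j <;> simp [hk, Set.mem_Icc, hab, le_refl]) i
  unfold deltaE
  refine le_antisymm (iSup_le fun k => ?_) (sup_le ?_ ?_)
  · by_cases hk : k = j
    · subst hk; simp only [if_pos rfl]; exact le_sup_left
    · simp only [if_neg hk]
      refine le_sup_of_le_right ?_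
      calc M i k + ((a : ℝ) : EReal) ≤ 0 + (a : EReal) :=
            add_le_add_left (myAux_entry_nonpos hM i k) _
        _ = (a : EReal) := zero_add _
  · have := le_iSup (fun k => M i k + (((if k = j then b else a : ℝ)) : EReal)) j
    simpa using this
  · exact hlow

lemma myAux_char {n : ℕ} [Nonempty (Fin n)] {a b : ℝ} (hab : a < b)
    {W M : Fin n → Fin n → EReal} (hW : RowAstic W) (hM : RowAstic M) :
    (∀ x : Fin n → ℝ, (∀ i, x i ∈ Set.Icc a b) → ∀ i, deltaE M x i = deltaE W x i) ↔
    (∀ i j, M i j ⊔ ((a - b : ℝ) : EReal) = W i j ⊔ ((a - b : ℝ) : EReal)) := by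
  have hcb : ((a - b : ℝ) : EReal) + (b : EReal) = (a : EReal) := by
    rw [← EReal.coe_add]; norm_num
  constructor
  · intro h i j
    have hbox : ∀ k, (if k = j then b else a) ∈ Set.Icc a b := fun k => by
      by_cases hk : k = j <;> simp [hk, Set.mem_Icc, hab.le, le_refl]
    have he := h (fun k => if k = j then b else a) hbox i
    rw [myAux_delta_test hab.le hM, myAux_delta_test hab.le hW] at he
    have h1 : (M i j ⊔ ((a - b : ℝ) : EReal)) + (b : EReal)
        = (W i j ⊔ ((a - b : ℝ) : EReal)) + (b : EReal) := by
      rw [myAux_sup_add_real, myAux_sup_add_real, hcb, he]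
    calc M i j ⊔ ((a - b : ℝ) : EReal)
        = (M i j ⊔ ((a - b : ℝ) : EReal)) + (b : EReal) - (b : EReal) :=
          (EReal.add_sub_cancel_right).symm
      _ = (W i j ⊔ ((a - b : ℝ) : EReal)) + (b : EReal) - (b : EReal) := by rw [h1]
      _ = W i j ⊔ ((a - b : ℝ) : EReal) := EReal.add_sub_cancel_right
  · intro h x hx i
    rw [myAux_delta_trunc hM hx, myAux_delta_trunc hW hx]
    exact iSup_congr fun j => by rw [h i j]

theorem stmt10 (n : ℕ) (hn : 0 < n) (a b : ℝ) (ha : 0 ≤ a) (hab : a < b)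
    (W : Fin n → Fin n → EReal) (hW : DoublyAstic W)
    (CW : Set (Fin n → Fin n → EReal))
    (hCW : CW = {M | DoublyAstic M ∧
      ∀ x : Fin n → ℝ, (∀ i, x i ∈ Set.Icc a b) → ∀ i, deltaE M x i = deltaE W x i}) :
    (∀ A ∈ CW, ∀ B ∈ CW, (fun i j => A i j ⊔ B i j) ∈ CW ∧ (fun i j => A i j ⊓ B i j) ∈ CW) ∧
    (∀ S : Set (Fin n → Fin n → EReal), S ⊆ CW → S.Nonempty →
      (fun i j => ⨆ M ∈ S, M i j) ∈ CW ∧ (fun i j => ⨅ M ∈ S, M i j) ∈ CW) ∧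
    ((fun i j => W i j ⊔ ((a - b : ℝ) : EReal)) ∈ CW ∧
      ∀ M ∈ CW, ∀ i j, M i j ≤ W i j ⊔ ((a - b : ℝ) : EReal)) ∧
    ((fun i j => if ((a - b : ℝ) : EReal) < W i j then W i j else (⊥ : EReal)) ∈ CW ∧
      ∀ M ∈ CW, ∀ i j,
        (if ((a - b : ℝ) : EReal) < W i j then W i j else (⊥ : EReal)) ≤ M i j) := by
  haveI : Nonempty (Fin n) := ⟨⟨0, hn⟩⟩
  set c : EReal := ((a - b : ℝ) : EReal) with hc
  have hc0 : c < 0 := by rw [hc]; exact_mod_cast sub_neg.2 hab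
  -- characterization of membership
  have hmem : ∀ M, M ∈ CW ↔ DoublyAstic M ∧ ∀ i j, M i j ⊔ c = W i j ⊔ c := by
    intro M
    rw [hCW, Set.mem_setOf_eq]
    constructor
    · rintro ⟨hdM, hd⟩
      exact ⟨hdM, (myAux_char hab hW.1 hdM.1).1 hd⟩
    · rintro ⟨hdM, hd⟩
      exact ⟨hdM, (myAux_char hab hW.1 hdM.1).2 hd⟩
  -- family closure
  have hfam : ∀ S : Set (Fin n → Fin n → EReal), S ⊆ CW → S.Nonempty →
      (fun i j => ⨆ M ∈ S, M i j) ∈ CW ∧ (fun i j => ⨅ M ∈ S, M i j) ∈ CW := by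
    intro S hSS ⟨M0, hM0⟩
    have hda : ∀ M ∈ S, DoublyAstic M := fun M hM => ((hmem M).1 (hSS hM)).1
    have hent : ∀ M ∈ S, ∀ i j, M i j ⊔ c = W i j ⊔ c := fun M hM => ((hmem M).1 (hSS hM)).2
    -- every M in S agrees with W above c; W i j > c forces M i j = W i j
    have hforce : ∀ M ∈ S, ∀ i j, c < W i j → M i j = W i j := fun M hM i j hlt =>
      myAux_sup_c_eq hlt (hent M hM i j)
    constructor
    · refine (hmem _).2 ⟨⟨fun i => ?_, fun j => ?_⟩, fun i j => ?_⟩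
      · show (⨆ j, ⨆ M ∈ S, M i j) = 0
        refine le_antisymm (iSup_le fun j => iSup₂_le fun M hM =>
          myAux_entry_nonpos (hda M hM).1 i j) ?_
        obtain ⟨j, hj⟩ := myAux_row_exists (hda M0 hM0).1 i
        calc (0 : EReal) = M0 i j := hj.symm
          _ ≤ ⨆ M ∈ S, M i j := le_iSup₂ (f := fun M _ => M i j) M0 hM0
          _ ≤ _ := le_iSup (fun j => ⨆ M ∈ S, M i j) j
      · show (⨆ i, ⨆ M ∈ S, M i j) = 0
        refine le_antisymm (iSup_le fun i => iSup₂_le fun M hM =>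
          myAux_entry_nonpos (hda M hM).1 i j) ?_
        obtain ⟨i, hi⟩ := myAux_col_exists (hda M0 hM0).2 j
        calc (0 : EReal) = M0 i j := hi.symm
          _ ≤ ⨆ M ∈ S, M i j := le_iSup₂ (f := fun M _ => M i j) M0 hM0
          _ ≤ _ := le_iSup (fun i => ⨆ M ∈ S, M i j) i
      · show (⨆ M ∈ S, M i j) ⊔ c = W i j ⊔ c
        refine le_antisymm (sup_le (iSup₂_le fun M hM =>
          (le_sup_left.trans (hent M hM i j).le)) le_sup_right) ?_
        calc W i j ⊔ c = M0 i j ⊔ c := (hent M0 hM0 i j).symm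
          _ ≤ (⨆ M ∈ S, M i j) ⊔ c :=
            sup_le_sup_right (le_iSup₂ (f := fun M _ => M i j) M0 hM0) c
    · refine (hmem _).2 ⟨⟨fun i => ?_, fun j => ?_⟩, fun i j => ?_⟩
      · show (⨆ j, ⨅ M ∈ S, M i j) = 0
        refine le_antisymm (iSup_le fun j =>
          ((iInf₂_le (f := fun M _ => M i j) M0 hM0).trans
            (myAux_entry_nonpos (hda M0 hM0).1 i j))) ?_
        obtain ⟨j, hj⟩ := myAux_row_exists hW.1 i
        have h0 : (0 : EReal) ≤ ⨅ M ∈ S, M i j :=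
          le_iInf₂ fun M hM => ((hforce M hM i j (hc0.trans_le hj.ge)).trans hj).ge
        exact h0.trans (le_iSup (fun j => ⨅ M ∈ S, M i j) j)
      · show (⨆ i, ⨅ M ∈ S, M i j) = 0
        refine le_antisymm (iSup_le fun i =>
          ((iInf₂_le (f := fun M _ => M i j) M0 hM0).trans
            (myAux_entry_nonpos (hda M0 hM0).1 i j))) ?_
        obtain ⟨i, hi⟩ := myAux_col_exists hW.2 j
        have h0 : (0 : EReal) ≤ ⨅ M ∈ S, M i j :=
          le_iInf₂ fun M hM => ((hforce M hM i j (hc0.trans_le hi.ge)).trans hi).ge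
        exact h0.trans (le_iSup (fun i => ⨅ M ∈ S, M i j) i)
      · show (⨅ M ∈ S, M i j) ⊔ c = W i j ⊔ c
        refine le_antisymm ((sup_le_sup_right (iInf₂_le (f := fun M _ => M i j) M0 hM0) c).trans
          (hent M0 hM0 i j).le) ?_
        rcases le_or_gt (W i j) c with hle | hlt
        · rw [sup_eq_right.2 hle]; exact le_sup_right
        · rw [sup_eq_left.2 hlt.le]
          refine le_sup_of_le_left (le_iInf₂ fun M hM => (hforce M hM i j hlt).ge)
  refine ⟨?_, hfam, ?_, ?_⟩
  · -- pairwise from families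
    intro A hA B hB
    have h := hfam {A, B} (by rintro M (rfl | rfl); exacts [hA, hB]) ⟨A, Set.mem_insert _ _⟩
    constructor
    · have he : (fun i j => ⨆ M ∈ ({A, B} : Set _), M i j) = fun i j => A i j ⊔ B i j :=
        funext fun i => funext fun j => iSup_pair
      exact he ▸ h.1
    · have he : (fun i j => ⨅ M ∈ ({A, B} : Set _), M i j) = fun i j => A i j ⊓ B i j :=
        funext fun i => funext fun j => iInf_pair
      exact he ▸ h.2
  · -- greatest element
    constructor
    · refine (hmem _).2 ⟨⟨fun i => ?_, fun j => ?_⟩, fun i j => ?_⟩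
      · show (⨆ j, W i j ⊔ c) = 0
        refine le_antisymm (iSup_le fun j =>
          sup_le (myAux_entry_nonpos hW.1 i j) hc0.le) ?_
        obtain ⟨j, hj⟩ := myAux_row_exists hW.1 i
        exact le_trans (le_sup_of_le_left hj.ge) (le_iSup (fun j => W i j ⊔ c) j)
      · show (⨆ i, W i j ⊔ c) = 0
        refine le_antisymm (iSup_le fun i =>
          sup_le (myAux_entry_nonpos hW.1 i j) hc0.le) ?_
        obtain ⟨i, hi⟩ := myAux_col_exists hW.2 j
        exact le_trans (le_sup_of_le_left hi.ge) (le_iSup (fun i => W i j ⊔ c) i)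
      · show (W i j ⊔ c) ⊔ c = W i j ⊔ c
        rw [sup_assoc, sup_idem]
    · intro M hM i j
      calc M i j ≤ M i j ⊔ c := le_sup_left
        _ = W i j ⊔ c := ((hmem M).1 hM).2 i j
  · -- least element
    have hent : ∀ i j, (if c < W i j then W i j else (⊥ : EReal)) ⊔ c = W i j ⊔ c := by
      intro i j
      by_cases h : c < W i j
      · rw [if_pos h]
      · rw [if_neg h, bot_sup_eq, sup_eq_right.2 (not_lt.1 h)]
    constructor
    · refine (hmem _).2 ⟨⟨fun i => ?_, fun j => ?_⟩, hent⟩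
      · show (⨆ j, if c < W i j then W i j else (⊥ : EReal)) = 0
        refine le_antisymm (iSup_le fun j => ?_) ?_
        · by_cases h : c < W i j
          · rw [if_pos h]; exact myAux_entry_nonpos hW.1 i j
          · rw [if_neg h]; exact bot_le
        · obtain ⟨j, hj⟩ := myAux_row_exists hW.1 i
          have h0 : (if c < W i j then W i j else (⊥ : EReal)) = 0 := by
            rw [if_pos (hc0.trans_le hj.ge), hj]
          exact h0.symm.trans_le (le_iSup (fun j => if c < W i j then W i j else (⊥ : EReal)) j)
      · show (⨆ i, if c < W i j then W i j else (⊥ : EReal)) = 0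
        refine le_antisymm (iSup_le fun i => ?_) ?_
        · by_cases h : c < W i j
          · rw [if_pos h]; exact myAux_entry_nonpos hW.1 i j
          · rw [if_neg h]; exact bot_le
        · obtain ⟨i, hi⟩ := myAux_col_exists hW.2 j
          have h0 : (if c < W i j then W i j else (⊥ : EReal)) = 0 := by
            rw [if_pos (hc0.trans_le hi.ge), hi]
          exact h0.symm.trans_le (le_iSup (fun i => if c < W i j then W i j else (⊥ : EReal)) i)
    · intro M hM i j
      by_cases h : c < W i j
      · rw [if_pos h]
        exact (myAux_sup_c_eq h (((hmem M).1 hM).2 i j)).ge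
      · rw [if_neg h]; exact bot_le
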